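/- Let γ : [0,T] → V be a unit-speed bounded variation path with occupation measure μ, and let ω_n be a uniformly bounded sequence of μ-integrable 1-forms with values in a normed space W converging to ω in L^1(μ). Then for each r, the r-th iterated integral of the line integral ∫ ω_n(dγ) converges to the r-th iterated integral of ∫ ω(dγ) in W^{⊗r}. -/

import Mathlib

open MeasureTheory Set Filter
open TopologicalSpace


/-- Transfer an a.e. property on `[0,T]` to an a.e. property of a coordinate on the box. -/
lemma ae_eval_of_ae_Icc {r : ℕ} {T : ℝ} {p : ℝ → Prop}
    (hp : ∀ᵐ t ∂(volume.restrict (Set.Icc 0 T)), p t) (i : Fin r) :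
    ∀ᵐ u : Fin r → ℝ ∂(volume.restrict (Set.pi Set.univ fun _ => Set.Ioo (0:ℝ) T)),
      p (u i) := by
  have h0 : volume ({t | ¬ p t} ∩ Set.Icc (0:ℝ) T) = 0 := by
    rw [ae_iff] at hp
    rwa [Measure.restrict_apply' measurableSet_Icc] at hp
  obtain ⟨M, hMsub, hMmeas, hM0⟩ := exists_measurable_superset_of_null h0
  rw [ae_iff, Measure.restrict_apply' (MeasurableSet.univ_pi fun _ => measurableSet_Ioo)]
  refine measure_mono_null (t := (fun v : Fin r → ℝ => v i) ⁻¹' M) (fun u hu => ?_) ?_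
  · exact hMsub ⟨hu.1, Set.Ioo_subset_Icc_self (hu.2 i (Set.mem_univ i))⟩
  · rw [show (volume : Measure (Fin r → ℝ)) = Measure.pi fun _ => volume from rfl]
    exact Measure.pi_eval_preimage_null _ hM0

/-- Composition with a coordinate evaluation preserves a.e. strong measurability. -/
lemma aesm_comp_eval {r : ℕ} {T : ℝ} {X : Type*} [NormedAddCommGroup X] {h : ℝ → X}
    (hh : AEStronglyMeasurable h (volume.restrict (Set.Icc 0 T))) (i : Fin r) :
    AEStronglyMeasurable (fun u : Fin r → ℝ => h (u i))
      (volume.restrict (Set.pi Set.univ fun _ => Set.Ioo (0:ℝ) T)) := by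
  refine ⟨fun u => hh.mk h (u i), hh.stronglyMeasurable_mk.comp_measurable (measurable_pi_apply i), ?_⟩
  exact ae_eval_of_ae_Icc hh.ae_eq_mk i


/-- Applying a continuous multilinear map to a.e. strongly measurable components is
a.e. strongly measurable. -/
lemma aesm_multilinear_comp {α : Type*} [MeasurableSpace α] {μ : Measure α}
    {ι : Type*} [Fintype ι] {W : Type*} [NormedAddCommGroup W] [NormedSpace ℝ W]
    (φ : ContinuousMultilinearMap ℝ (fun _ : ι => W) ℝ) {f : ι → α → W}
    (hf : ∀ i, AEStronglyMeasurable (f i) μ) :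
    AEStronglyMeasurable (fun a => φ (fun i => f i a)) μ := by
  classical
  borelize W
  set g : ι → α → W := fun i => (hf i).mk (f i) with hg
  have hgsm : ∀ i, StronglyMeasurable (g i) := fun i => (hf i).stronglyMeasurable_mk
  set t : Set W := closure (⋃ i, Set.range (g i)) with ht
  have htsep : IsSeparable t := (IsSeparable.iUnion fun i => (hgsm i).isSeparable_range).closure
  haveI : SeparableSpace t := htsep.separableSpace
  haveI : SecondCountableTopology t := UniformSpace.secondCountable_of_separable t
  set G : α → ι → t := fun a i => ⟨g i a, subset_closure (Set.mem_iUnion.2 ⟨i, Set.mem_range_self a⟩)⟩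
    with hG
  have hGmeas : Measurable G :=
    measurable_pi_lambda _ fun i => ((hgsm i).measurable).subtype_mk
  have hGsm : StronglyMeasurable G := hGmeas.stronglyMeasurable
  have hFcont : Continuous (fun v : ι → t => φ (fun i => (v i : W))) :=
    φ.coe_continuous.comp (continuous_pi fun i => continuous_subtype_val.comp (continuous_apply i))
  refine ⟨fun a => φ (fun i => (G a i : W)), hFcont.comp_stronglyMeasurable hGsm, ?_⟩
  filter_upwards [ae_all_iff.2 fun i => (hf i).ae_eq_mk] with a ha
  show φ (fun i => f i a) = φ (fun i => (G a i : W))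
  congr 1
  funext i
  exact ha i

/-- Norm bound for a continuous multilinear map on uniformly bounded vectors. -/
lemma multilinear_norm_bound {ι : Type*} [Fintype ι] {W : Type*} [NormedAddCommGroup W]
    [NormedSpace ℝ W] (φ : ContinuousMultilinearMap ℝ (fun _ : ι => W) ℝ)
    {C : ℝ} (v : ι → W) (hv : ∀ i, ‖v i‖ ≤ C) :
    ‖φ v‖ ≤ ‖φ‖ * C ^ (Fintype.card ι) := by
  calc ‖φ v‖ ≤ ‖φ‖ * ∏ i, ‖v i‖ := φ.le_opNorm v
  _ ≤ ‖φ‖ * C ^ (Fintype.card ι) := by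
      rw [← Finset.card_univ, ← Finset.prod_const]
      exact mul_le_mul_of_nonneg_left
        (Finset.prod_le_prod (fun i _ => norm_nonneg _) (fun i _ => hv i)) (norm_nonneg φ)

/-- Difference bound for a continuous multilinear map. -/
lemma multilinear_diff_bound {ι : Type*} [Fintype ι] {W : Type*} [NormedAddCommGroup W]
    [NormedSpace ℝ W] (φ : ContinuousMultilinearMap ℝ (fun _ : ι => W) ℝ)
    {C : ℝ} (hC : 0 ≤ C) (a b : ι → W) (d : ι → ℝ)
    (ha : ∀ i, ‖a i‖ ≤ C) (hb : ∀ i, ‖b i‖ ≤ C) (hd : ∀ i, ‖a i - b i‖ ≤ d i) :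
    ‖φ a - φ b‖ ≤ (‖φ‖ * C ^ (Fintype.card ι - 1)) * ∑ i, d i := by
  classical
  have key : ∀ i : ι, (∏ j, if j = i then ‖a i - b i‖ else max ‖a j‖ ‖b j‖)
      ≤ C ^ (Fintype.card ι - 1) * d i := by
    intro i
    rw [← Finset.mul_prod_erase Finset.univ _ (Finset.mem_univ i), if_pos rfl]
    have h1 : (∏ j ∈ Finset.univ.erase i, if j = i then ‖a i - b i‖ else max ‖a j‖ ‖b j‖)
        ≤ C ^ (Fintype.card ι - 1) := by
      calc (∏ j ∈ Finset.univ.erase i, if j = i then ‖a i - b i‖ else max ‖a j‖ ‖b j‖)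
          ≤ ∏ _j ∈ Finset.univ.erase i, C := by
            refine Finset.prod_le_prod (fun j _ => ?_) (fun j hj => ?_)
            · split <;> positivity
            · rw [if_neg (Finset.ne_of_mem_erase hj)]
              exact max_le (ha j) (hb j)
        _ = C ^ (Fintype.card ι - 1) := by
            rw [Finset.prod_const, Finset.card_erase_of_mem (Finset.mem_univ i),
              Finset.card_univ]
    calc ‖a i - b i‖ * ∏ j ∈ Finset.univ.erase i, (if j = i then ‖a i - b i‖ else max ‖a j‖ ‖b j‖)
        ≤ d i * C ^ (Fintype.card ι - 1) := by
          refine mul_le_mul (hd i) h1 (Finset.prod_nonneg fun j _ => ?_)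
            ((norm_nonneg _).trans (hd i))
          split <;> positivity
      _ = C ^ (Fintype.card ι - 1) * d i := mul_comm _ _
  calc ‖φ a - φ b‖ ≤ ‖φ‖ * ∑ i, ∏ j, if j = i then ‖a i - b i‖ else max ‖a j‖ ‖b j‖ :=
        φ.norm_image_sub_le' a b
    _ ≤ ‖φ‖ * ∑ i, C ^ (Fintype.card ι - 1) * d i := by
        exact mul_le_mul_of_nonneg_left (Finset.sum_le_sum fun i _ => key i) (norm_nonneg φ)
    _ = (‖φ‖ * C ^ (Fintype.card ι - 1)) * ∑ i, d i := by
        rw [← Finset.mul_sum, mul_assoc]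


/-- Bound the lintegral over the box of a function of one coordinate. -/
lemma lintegral_eval_le_box {r : ℕ} {T : ℝ} (f : ℝ → ENNReal) (hf : Measurable f) (i : Fin r) :
    (∫⁻ u in Set.pi Set.univ (fun _ : Fin r => Set.Ioo (0:ℝ) T), f (u i))
      ≤ ENNReal.ofReal T ^ (r - 1) * ∫⁻ t in Set.Icc (0:ℝ) T, f t := by
  classical
  have hle : Measure.map (fun u : Fin r → ℝ => u i)
      (volume.restrict (Set.pi Set.univ (fun _ : Fin r => Set.Ioo (0:ℝ) T)))
      ≤ ENNReal.ofReal T ^ (r - 1) • volume.restrict (Set.Icc (0:ℝ) T) := by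
    refine Measure.le_iff.2 fun s hs => ?_
    rw [Measure.map_apply (measurable_pi_apply i) hs,
      Measure.restrict_apply (hs.preimage (measurable_pi_apply i))]
    have hset : (fun u : Fin r → ℝ => u i) ⁻¹' s ∩
        (Set.pi Set.univ (fun _ : Fin r => Set.Ioo (0:ℝ) T))
        = Set.pi Set.univ (fun j => if j = i then s ∩ Set.Ioo (0:ℝ) T else Set.Ioo (0:ℝ) T) := by
      ext u
      constructor
      · rintro ⟨h1, h2⟩ j _
        by_cases hj : j = i
        · subst hj; simp only [if_pos rfl]; exact ⟨h1, h2 j (Set.mem_univ j)⟩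
        · simpa [hj] using h2 j (Set.mem_univ j)
      · intro h
        have hi := h i (Set.mem_univ i)
        simp only [if_pos rfl] at hi
        refine ⟨hi.1, fun j _ => ?_⟩
        have hj := h j (Set.mem_univ j)
        by_cases hji : j = i
        · subst hji; simp only [if_pos rfl] at hj; exact hj.2
        · simpa only [if_neg hji] using hj
    rw [hset, show (volume : Measure (Fin r → ℝ)) = Measure.pi fun _ => volume from rfl,
      Measure.pi_pi]
    rw [← Finset.mul_prod_erase Finset.univ _ (Finset.mem_univ i), if_pos rfl]
    have hrest : ∀ j ∈ Finset.univ.erase i,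
        volume (if j = i then s ∩ Set.Ioo (0:ℝ) T else Set.Ioo (0:ℝ) T) = ENNReal.ofReal T := by
      intro j hj
      rw [if_neg (Finset.ne_of_mem_erase hj), Real.volume_Ioo, sub_zero]
    rw [Finset.prod_congr rfl hrest, Finset.prod_const,
      Finset.card_erase_of_mem (Finset.mem_univ i), Finset.card_univ, Fintype.card_fin,
      Measure.smul_apply, smul_eq_mul, Measure.restrict_apply hs, mul_comm]
    exact mul_le_mul_right
      (measure_mono (Set.inter_subset_inter_right s Set.Ioo_subset_Icc_self)) _
  calc (∫⁻ u in Set.pi Set.univ (fun _ : Fin r => Set.Ioo (0:ℝ) T), f (u i))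
      = ∫⁻ t, f t ∂(Measure.map (fun u : Fin r → ℝ => u i)
          (volume.restrict (Set.pi Set.univ (fun _ : Fin r => Set.Ioo (0:ℝ) T)))) :=
        (lintegral_map hf (measurable_pi_apply i)).symm
    _ ≤ ∫⁻ t, f t ∂(ENNReal.ofReal T ^ (r - 1) • volume.restrict (Set.Icc (0:ℝ) T)) :=
        lintegral_mono' hle le_rfl
    _ = ENNReal.ofReal T ^ (r - 1) * ∫⁻ t in Set.Icc (0:ℝ) T, f t := lintegral_smul_measure _ _

/-- The open simplex `{0 < u_1 < … < u_r < T}` inside `Fin r → ℝ`. -/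
def simplexSet (r : ℕ) (T : ℝ) : Set (Fin r → ℝ) :=
  {u | (∀ i j : Fin r, i < j → u i < u j) ∧ ∀ i, u i ∈ Set.Ioo 0 T}

/-- Let `γ : [0,T] → V` be a unit-speed bounded-variation path (with a.e.
derivative `γ'` of norm one) and let `ωn` be a uniformly bounded sequence of integrable
`1`-forms with values in `Hom(V,W)` converging to `ω` in `L¹` of the occupation measure —
equivalently, `∫_0^T ‖ωn(γ_t) − ω(γ_t)‖ dt → 0`.  Then for each `r` the `r`-th iterated
integral of the line integral `∫ ωn(dγ)` converges in `W^{⊗r}` to that of `∫ ω(dγ)`; the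
convergence in the projective tensor norm is expressed via its dual characterization:
pairings with every continuous `r`-multilinear functional converge. -/
theorem iterated_integral_line_integral_continuity
    {V W : Type*} [NormedAddCommGroup V] [NormedSpace ℝ V]
    [NormedAddCommGroup W] [NormedSpace ℝ W]
    (T : ℝ) (hT : 0 ≤ T) (γ γ' : ℝ → V)
    (hderiv : ∀ᵐ t ∂(volume.restrict (Set.Icc 0 T)), HasDerivAt γ (γ' t) t)
    (hspeed : ∀ᵐ t ∂(volume.restrict (Set.Icc 0 T)), ‖γ' t‖ = 1)
    (hmeasγ' : AEStronglyMeasurable γ' volume)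
    (ωn : ℕ → V → (V →L[ℝ] W)) (ω : V → (V →L[ℝ] W))
    (C : ℝ) (hbound : ∀ n x, ‖ωn n x‖ ≤ C)
    (hmeasn : ∀ n, AEStronglyMeasurable (fun t => ωn n (γ t)) (volume.restrict (Set.Icc 0 T)))
    (hmeasω : AEStronglyMeasurable (fun t => ω (γ t)) (volume.restrict (Set.Icc 0 T)))
    (hintω : IntegrableOn (fun t => ‖ω (γ t)‖) (Set.Icc 0 T))
    (hconv : Tendsto (fun n => ∫ t in Set.Icc 0 T, ‖ωn n (γ t) - ω (γ t)‖) atTop (nhds 0))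
    (r : ℕ) (φ : ContinuousMultilinearMap ℝ (fun _ : Fin r => W) ℝ) :
    Tendsto (fun n => ∫ u in simplexSet r T, φ (fun i => (ωn n (γ (u i))) (γ' (u i))))
      atTop (nhds (∫ u in simplexSet r T, φ (fun i => (ω (γ (u i))) (γ' (u i))))) := by
  classical
  set μI := volume.restrict (Set.Icc (0:ℝ) T) with hμI
  set B : Set (Fin r → ℝ) := Set.pi Set.univ (fun _ : Fin r => Set.Ioo (0:ℝ) T) with hBdef
  have hSB : simplexSet r T ⊆ B := fun u hu j _ => hu.2 j
  have hC0 : (0:ℝ) ≤ C := (norm_nonneg _).trans (hbound 0 0)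
  haveI : IsFiniteMeasure μI :=
    ⟨by rw [hμI, Measure.restrict_apply_univ]; exact measure_Icc_lt_top⟩
  set g : ℕ → ℝ → ℝ := fun n t => ‖ωn n (γ t) - ω (γ t)‖ with hgdef
  have hgmeas : ∀ n, AEStronglyMeasurable (g n) μI := fun n => ((hmeasn n).sub hmeasω).norm
  have hgnonneg : ∀ n t, 0 ≤ g n t := fun n t => norm_nonneg _
  have hgint : ∀ n, Integrable (g n) μI := by
    intro n
    refine Integrable.mono' ((integrable_const C).add hintω) (hgmeas n)
      (Filter.Eventually.of_forall fun t => ?_)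
    rw [Real.norm_of_nonneg (hgnonneg n t)]
    exact (norm_sub_le _ _).trans (add_le_add_left (hbound n _) _)
  -- the limit form is a.e. bounded by `C` as well
  have hωC : ∀ᵐ t ∂μI, ‖ω (γ t)‖ ≤ C := by
    set q : ℝ → ℝ := fun t => max (‖ω (γ t)‖ - C) 0 with hq
    have hqnn : ∀ t, 0 ≤ q t := fun t => le_max_right _ _
    have hqmeas : AEStronglyMeasurable q μI :=
      (hmeasω.norm.sub aestronglyMeasurable_const).sup aestronglyMeasurable_const
    have hqint : Integrable q μI := by
      refine hintω.mono' hqmeas (Filter.Eventually.of_forall fun t => ?_)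
      rw [Real.norm_of_nonneg (hqnn t)]
      exact max_le (by linarith [norm_nonneg (ω (γ t))]) (norm_nonneg _)
    have hqle : ∀ n, ∫ t, q t ∂μI ≤ ∫ t in Set.Icc (0:ℝ) T, g n t := by
      intro n
      refine integral_mono hqint (hgint n) fun t => ?_
      refine max_le ?_ (hgnonneg n t)
      have h1 := norm_sub_norm_le (ω (γ t)) (ωn n (γ t))
      have h2 : ‖ω (γ t) - ωn n (γ t)‖ = g n t := norm_sub_rev _ _
      have h3 := hbound n (γ t)
      linarith
    have hq0 : ∫ t, q t ∂μI = 0 :=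
      le_antisymm (ge_of_tendsto hconv (Filter.Eventually.of_forall hqle))
        (integral_nonneg hqnn)
    have hae := (integral_eq_zero_iff_of_nonneg hqnn hqint).1 hq0
    filter_upwards [hae] with t ht
    have h0 : max (‖ω (γ t)‖ - C) 0 = 0 := ht
    have := le_max_left (‖ω (γ t)‖ - C) 0
    linarith [h0 ▸ this]
  -- componentwise a.e. strong measurability of the integrands
  have happly : ∀ n, AEStronglyMeasurable (fun t => (ωn n (γ t)) (γ' t)) μI := fun n =>
    isBoundedBilinearMap_apply.continuous.comp_aestronglyMeasurable₂ (hmeasn n)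
      (hmeasγ'.restrict)
  have happlyω : AEStronglyMeasurable (fun t => (ω (γ t)) (γ' t)) μI :=
    isBoundedBilinearMap_apply.continuous.comp_aestronglyMeasurable₂ hmeasω
      (hmeasγ'.restrict)
  have hFn_aesm : ∀ n, AEStronglyMeasurable
      (fun u : Fin r → ℝ => φ (fun i => (ωn n (γ (u i))) (γ' (u i)))) (volume.restrict B) :=
    fun n => aesm_multilinear_comp φ (fun i => aesm_comp_eval (happly n) i)
  have hF_aesm : AEStronglyMeasurable
      (fun u : Fin r → ℝ => φ (fun i => (ω (γ (u i))) (γ' (u i)))) (volume.restrict B) :=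
    aesm_multilinear_comp φ (fun i => aesm_comp_eval happlyω i)
  -- a.e. facts on the box
  have hspeedB : ∀ᵐ u ∂volume.restrict B, ∀ i, ‖γ' (u i)‖ = 1 :=
    ae_all_iff.2 fun i => ae_eval_of_ae_Icc hspeed i
  have hωCB : ∀ᵐ u ∂volume.restrict B, ∀ i, ‖ω (γ (u i))‖ ≤ C :=
    ae_all_iff.2 fun i => ae_eval_of_ae_Icc hωC i
  have hresmono : volume.restrict (simplexSet r T) ≤ volume.restrict B :=
    Measure.restrict_mono hSB le_rfl
  have haes : ∀ {p : (Fin r → ℝ) → Prop}, (∀ᵐ u ∂volume.restrict B, p u) →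
      (∀ᵐ u ∂volume.restrict (simplexSet r T), p u) := fun h => ae_mono hresmono h
  have hvolB : volume B < ⊤ := by
    rw [hBdef, show (volume : Measure (Fin r → ℝ)) = Measure.pi fun _ => volume from rfl,
      Measure.pi_pi]
    exact ENNReal.prod_lt_top fun _ _ => by simp [Real.volume_Ioo]
  haveI : IsFiniteMeasure (volume.restrict (simplexSet r T)) :=
    ⟨by rw [Measure.restrict_apply_univ]; exact lt_of_le_of_lt (measure_mono hSB) hvolB⟩
  -- integrability over the simplex
  have hFn_int : ∀ n, Integrable
      (fun u : Fin r → ℝ => φ (fun i => (ωn n (γ (u i))) (γ' (u i))))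
      (volume.restrict (simplexSet r T)) := by
    intro n
    refine Integrable.mono' (integrable_const (‖φ‖ * C ^ r))
      ((hFn_aesm n).mono_measure hresmono) ?_
    filter_upwards [haes hspeedB] with u hu
    refine (multilinear_norm_bound φ _ fun i => ?_).trans_eq (by rw [Fintype.card_fin])
    calc ‖(ωn n (γ (u i))) (γ' (u i))‖ ≤ ‖ωn n (γ (u i))‖ * ‖γ' (u i)‖ :=
          ContinuousLinearMap.le_opNorm _ _
      _ ≤ C := by rw [hu i, mul_one]; exact hbound n _
  have hF_int : Integrable
      (fun u : Fin r → ℝ => φ (fun i => (ω (γ (u i))) (γ' (u i))))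
      (volume.restrict (simplexSet r T)) := by
    refine Integrable.mono' (integrable_const (‖φ‖ * C ^ r))
      (hF_aesm.mono_measure hresmono) ?_
    filter_upwards [haes hspeedB, haes hωCB] with u hu hu2
    refine (multilinear_norm_bound φ _ fun i => ?_).trans_eq (by rw [Fintype.card_fin])
    calc ‖(ω (γ (u i))) (γ' (u i))‖ ≤ ‖ω (γ (u i))‖ * ‖γ' (u i)‖ :=
          ContinuousLinearMap.le_opNorm _ _
      _ ≤ C := by rw [hu i, mul_one]; exact hu2 i
  -- measurable representatives of the `g n`
  set G : ℕ → ℝ → ℝ := fun n => (hgmeas n).mk (g n) with hGdef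
  have hGmeas : ∀ n, Measurable (G n) := fun n => (hgmeas n).stronglyMeasurable_mk.measurable
  have hGae : ∀ n, g n =ᵐ[μI] G n := fun n => (hgmeas n).ae_eq_mk
  set K : ℝ := (‖φ‖ * C ^ (r - 1)) * ((r : ℝ) * T ^ (r - 1)) with hKdef
  have hKnn : 0 ≤ K := by positivity
  -- the key quantitative bound
  have key : ∀ n, |(∫ u in simplexSet r T, φ (fun i => (ωn n (γ (u i))) (γ' (u i)))) -
      ∫ u in simplexSet r T, φ (fun i => (ω (γ (u i))) (γ' (u i)))| ≤
      K * ∫ t in Set.Icc (0:ℝ) T, g n t := by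
    intro n
    rw [← integral_sub (hFn_int n) hF_int]
    have hintg_nn : 0 ≤ ∫ t in Set.Icc (0:ℝ) T, g n t := integral_nonneg (hgnonneg n)
    have hchain : (∫⁻ u in simplexSet r T,
        ENNReal.ofReal ‖φ (fun i => (ωn n (γ (u i))) (γ' (u i))) -
          φ (fun i => (ω (γ (u i))) (γ' (u i)))‖)
        ≤ ENNReal.ofReal (K * ∫ t in Set.Icc (0:ℝ) T, g n t) := by
      have hGiae : ∀ᵐ u ∂volume.restrict B, ∀ i, g n (u i) = G n (u i) :=
        ae_all_iff.2 fun i => ae_eval_of_ae_Icc (hGae n) i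
      have step1 : (∫⁻ u in simplexSet r T,
          ENNReal.ofReal ‖φ (fun i => (ωn n (γ (u i))) (γ' (u i))) -
            φ (fun i => (ω (γ (u i))) (γ' (u i)))‖)
          ≤ ∫⁻ u in simplexSet r T,
            (ENNReal.ofReal (‖φ‖ * C ^ (r - 1)) * ∑ i, ENNReal.ofReal (G n (u i))) := by
        refine lintegral_mono_ae ?_
        filter_upwards [haes hspeedB, haes hωCB, haes hGiae] with u h1 h2 h3
        have hdiff : ‖φ (fun i => (ωn n (γ (u i))) (γ' (u i))) -
            φ (fun i => (ω (γ (u i))) (γ' (u i)))‖ ≤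
            (‖φ‖ * C ^ (r - 1)) * ∑ i, g n (u i) := by
          have hb1 : ∀ i : Fin r, ‖(ωn n (γ (u i))) (γ' (u i))‖ ≤ C := fun i =>
            (ContinuousLinearMap.le_opNorm _ _).trans
              (by rw [h1 i, mul_one]; exact hbound n _)
          have hb2 : ∀ i : Fin r, ‖(ω (γ (u i))) (γ' (u i))‖ ≤ C := fun i =>
            (ContinuousLinearMap.le_opNorm _ _).trans (by rw [h1 i, mul_one]; exact h2 i)
          have hb3 : ∀ i : Fin r, ‖(ωn n (γ (u i))) (γ' (u i)) -
              (ω (γ (u i))) (γ' (u i))‖ ≤ g n (u i) := by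
            intro i
            rw [← ContinuousLinearMap.sub_apply]
            exact (ContinuousLinearMap.le_opNorm _ _).trans
              (by rw [h1 i, mul_one])
          simpa [Fintype.card_fin] using
            multilinear_diff_bound φ hC0 (fun i => (ωn n (γ (u i))) (γ' (u i)))
              (fun i => (ω (γ (u i))) (γ' (u i))) (fun i => g n (u i)) hb1 hb2 hb3
        calc ENNReal.ofReal ‖φ (fun i => (ωn n (γ (u i))) (γ' (u i))) -
              φ (fun i => (ω (γ (u i))) (γ' (u i)))‖
            ≤ ENNReal.ofReal ((‖φ‖ * C ^ (r - 1)) * ∑ i, g n (u i)) :=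
              ENNReal.ofReal_le_ofReal hdiff
          _ = ENNReal.ofReal (‖φ‖ * C ^ (r - 1)) * ∑ i, ENNReal.ofReal (g n (u i)) := by
              rw [ENNReal.ofReal_mul (by positivity),
                ENNReal.ofReal_sum_of_nonneg (fun i _ => hgnonneg n _)]
          _ = ENNReal.ofReal (‖φ‖ * C ^ (r - 1)) * ∑ i, ENNReal.ofReal (G n (u i)) := by
              congr 1
              exact Finset.sum_congr rfl fun i _ => by rw [h3 i]
      have step2 : (∫⁻ u in simplexSet r T,
          (ENNReal.ofReal (‖φ‖ * C ^ (r - 1)) * ∑ i, ENNReal.ofReal (G n (u i))))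
          ≤ ∫⁻ u in B, (ENNReal.ofReal (‖φ‖ * C ^ (r - 1)) * ∑ i, ENNReal.ofReal (G n (u i))) :=
        lintegral_mono' hresmono le_rfl
      have hmeasi : ∀ i : Fin r, Measurable fun u : Fin r → ℝ => ENNReal.ofReal (G n (u i)) :=
        fun i => ENNReal.measurable_ofReal.comp ((hGmeas n).comp (measurable_pi_apply i))
      have step3 : (∫⁻ u in B,
          (ENNReal.ofReal (‖φ‖ * C ^ (r - 1)) * ∑ i, ENNReal.ofReal (G n (u i))))
          = ENNReal.ofReal (‖φ‖ * C ^ (r - 1)) *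
            ∑ i, ∫⁻ u in B, ENNReal.ofReal (G n (u i)) := by
        rw [lintegral_const_mul _ (Finset.measurable_sum _ fun i _ => hmeasi i),
          lintegral_finset_sum _ fun i _ => hmeasi i]
      have step5 : (∫⁻ t in Set.Icc (0:ℝ) T, ENNReal.ofReal (G n t))
          = ENNReal.ofReal (∫ t in Set.Icc (0:ℝ) T, g n t) := by
        have hae2 : (fun t => ENNReal.ofReal (g n t)) =ᵐ[μI]
            fun t => ENNReal.ofReal (G n t) :=
          (hGae n).mono fun t ht => by dsimp only; rw [ht]
        rw [← lintegral_congr_ae hae2]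
        exact (ofReal_integral_eq_lintegral_ofReal (hgint n)
          (Filter.Eventually.of_forall (hgnonneg n))).symm
      have step4 : ∀ i : Fin r, (∫⁻ u in B, ENNReal.ofReal (G n (u i)))
          ≤ ENNReal.ofReal T ^ (r - 1) *
            ENNReal.ofReal (∫ t in Set.Icc (0:ℝ) T, g n t) := by
        intro i
        rw [← step5]
        exact lintegral_eval_le_box _ (ENNReal.measurable_ofReal.comp (hGmeas n)) i
      calc (∫⁻ u in simplexSet r T,
          ENNReal.ofReal ‖φ (fun i => (ωn n (γ (u i))) (γ' (u i))) -
            φ (fun i => (ω (γ (u i))) (γ' (u i)))‖)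
          ≤ ENNReal.ofReal (‖φ‖ * C ^ (r - 1)) *
            ∑ i, ∫⁻ u in B, ENNReal.ofReal (G n (u i)) :=
            (step1.trans step2).trans_eq step3
        _ ≤ ENNReal.ofReal (‖φ‖ * C ^ (r - 1)) *
            ∑ _i : Fin r, (ENNReal.ofReal T ^ (r - 1) *
              ENNReal.ofReal (∫ t in Set.Icc (0:ℝ) T, g n t)) :=
            mul_le_mul_right (Finset.sum_le_sum fun i _ => step4 i) _
        _ = ENNReal.ofReal (K * ∫ t in Set.Icc (0:ℝ) T, g n t) := by
            rw [Finset.sum_const, Finset.card_univ, Fintype.card_fin, nsmul_eq_mul]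
            rw [← ENNReal.ofReal_natCast r, ← ENNReal.ofReal_pow hT,
              ← ENNReal.ofReal_mul (by positivity), ← ENNReal.ofReal_mul (by positivity),
              ← ENNReal.ofReal_mul (by positivity), hKdef]
            congr 1
            ring
    have htr := ENNReal.toReal_mono ENNReal.ofReal_ne_top hchain
    rw [ENNReal.toReal_ofReal (mul_nonneg hKnn hintg_nn)] at htr
    calc |∫ u in simplexSet r T, (φ (fun i => (ωn n (γ (u i))) (γ' (u i))) -
            φ (fun i => (ω (γ (u i))) (γ' (u i))))|
        = ‖∫ u in simplexSet r T, (φ (fun i => (ωn n (γ (u i))) (γ' (u i))) -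
            φ (fun i => (ω (γ (u i))) (γ' (u i))))‖ := (Real.norm_eq_abs _).symm
      _ ≤ (∫⁻ u in simplexSet r T,
            ENNReal.ofReal ‖φ (fun i => (ωn n (γ (u i))) (γ' (u i))) -
              φ (fun i => (ω (γ (u i))) (γ' (u i)))‖).toReal :=
          norm_integral_le_lintegral_norm _
      _ ≤ K * ∫ t in Set.Icc (0:ℝ) T, g n t := htr
  -- conclude
  have h2 : Tendsto (fun n => K * ∫ t in Set.Icc (0:ℝ) T, g n t) atTop (nhds 0) := by
    simpa using hconv.const_mul K
  have h3 : Tendsto (fun n =>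
      (∫ u in simplexSet r T, φ (fun i => (ωn n (γ (u i))) (γ' (u i)))) -
      ∫ u in simplexSet r T, φ (fun i => (ω (γ (u i))) (γ' (u i)))) atTop (nhds 0) :=
    squeeze_zero_norm (fun n => by rw [Real.norm_eq_abs]; exact key n) h2
  have := h3.add_const (∫ u in simplexSet r T, φ (fun i => (ω (γ (u i))) (γ' (u i))))
  simpa using this
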